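/- Let φ, θ ∈ ℝ satisfy cos(2θ)·cos(2φ) < 0 and cos(θ−φ) ≠ 0, and set α = cos(2θ)·cos(θ−φ), β = −cos(2θ)·cos(2φ), γ = cos(2φ)·cos(θ−φ). Let H be a complex Hilbert space, let A₀, A₁, B₀, B₁ be self-adjoint continuous linear operators on H with A₀² = A₁² = B₀² = B₁² = 1 and A_x·B_y = B_y·A_x for all x, y ∈ {0,1}. Then for every unit vector ψ ∈ H, |Re⟨ψ, (α·A₀B₀ + β·(A₀B₁ + A₁B₀) + γ·A₁B₁) ψ⟩| ≤ 2·sin²(θ+φ)·|sin(θ−φ)|. (Quantum bound of the J_{φ,θ} family of Bell expressions: the quantum bounds are ±η^Q(φ,θ) with η^Q(φ,θ) = 2·sin²(θ+φ)·sin(θ−φ).) -/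

import Mathlib

set_option maxHeartbeats 2000000

open Real

local notation "⟪" x ", " y "⟫" => @inner ℂ _ _ x y

private lemma key_sqrt (M1 M2 d a b η : ℝ) (hM1 : 0 ≤ M1) (hM2 : 0 ≤ M2) (hd : 0 ≤ d)
    (ha : 0 ≤ a) (hb : 0 ≤ b) (hη : 0 ≤ η)
    (hab : (a*b)^2 = d^2*(M1*M2)) (hid : a^2 + b^2 + d*(M1+M2) = η^2) :
    a + b ≤ η := by
  have hR : 0 ≤ d*(M1+M2)/2 := by positivity
  have h1 : a*b ≤ d*(M1+M2)/2 := by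
    nlinarith [mul_nonneg (sq_nonneg d) (sq_nonneg (M1-M2)), mul_nonneg ha hb]
  nlinarith [add_nonneg ha hb, mul_nonneg ha hb]

/-- Lemma 8 (ii): quantum bound of the `J_{φ,θ}` family. For any commuting-operator
quantum strategy with `±1`-valued self-adjoint observables and any unit vector `ψ`,
the Bell value is bounded in absolute value by `η^Q(φ,θ) = 2 sin²(θ+φ)|sin(θ−φ)|`. -/
theorem Jphitheta_quantum_bound (φ θ : ℝ)
    (h1 : cos (2 * θ) * cos (2 * φ) < 0) (h2 : cos (θ - φ) ≠ 0)
    {H : Type*} [NormedAddCommGroup H] [InnerProductSpace ℂ H] [CompleteSpace H]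
    (A B : Fin 2 → H →L[ℂ] H)
    (hAsa : ∀ x, IsSelfAdjoint (A x)) (hBsa : ∀ y, IsSelfAdjoint (B y))
    (hA2 : ∀ x, (A x) ∘L (A x) = 1) (hB2 : ∀ y, (B y) ∘L (B y) = 1)
    (hcomm : ∀ x y, (A x) ∘L (B y) = (B y) ∘L (A x))
    (ψ : H) (hψ : ‖ψ‖ = 1) :
    |(inner ℂ ψ
      ((((cos (2 * θ) * cos (θ - φ) : ℝ) : ℂ) • ((A 0) ∘L (B 0))
        + ((-(cos (2 * θ) * cos (2 * φ)) : ℝ) : ℂ) • ((A 0) ∘L (B 1) + (A 1) ∘L (B 0))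
        + (((cos (2 * φ) * cos (θ - φ) : ℝ)) : ℂ) • ((A 1) ∘L (B 1))) ψ) : ℂ).re|
      ≤ 2 * sin (θ + φ) ^ 2 * |sin (θ - φ)| := by
  -- abbreviations for trig values
  set C : ℝ := cos (θ + φ) with hCdef
  set S : ℝ := sin (θ + φ) with hSdef
  set c : ℝ := cos (θ - φ) with hcdef
  set s : ℝ := sin (θ - φ) with hsdef
  have hCS : C^2 + S^2 = 1 := cos_sq_add_sin_sq _
  have hcs : c^2 + s^2 = 1 := cos_sq_add_sin_sq _
  have h2θ : cos (2*θ) = C * c - S * s := by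
    rw [hCdef, hSdef, hcdef, hsdef, show 2*θ = (θ+φ)+(θ-φ) by ring, cos_add]
  have h2φ : cos (2*φ) = C * c + S * s := by
    rw [hCdef, hSdef, hcdef, hsdef, show 2*φ = (θ+φ)-(θ-φ) by ring, cos_sub]
  set α : ℝ := cos (2*θ) * c with hαdef
  set β : ℝ := -(cos (2*θ) * cos (2*φ)) with hβdef
  set γ : ℝ := cos (2*φ) * c with hγdef
  have hα : α = (C*c - S*s)*c := by rw [hαdef, h2θ]
  have hβ : β = (S*s)^2 - (C*c)^2 := by rw [hβdef, h2θ, h2φ]; ring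
  have hγ : γ = (C*c + S*s)*c := by rw [hγdef, h2φ]
  -- unit norm of operator images
  have hnorm : ∀ (T : H →L[ℂ] H), T ∘L T = 1 → IsSelfAdjoint T → ‖T ψ‖ = 1 := by
    intro T hT2 hTsa
    have hTT : T (T ψ) = ψ := by
      have := congrArg (fun (S : H →L[ℂ] H) => S ψ) hT2
      simpa using this
    have h : ⟪T ψ, T ψ⟫ = ⟪ψ, ψ⟫ := by
      have := hTsa.isSymmetric ψ (T ψ)
      simpa [hTT] using this
    rw [@inner_self_eq_norm_sq_to_K ℂ H _ _ _ (T ψ),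
        @inner_self_eq_norm_sq_to_K ℂ H _ _ _ ψ] at h
    have h2 : ‖T ψ‖^2 = ‖ψ‖^2 := by exact_mod_cast h
    nlinarith [norm_nonneg (T ψ)]
  set u0 : H := A 0 ψ with hu0
  set u1 : H := A 1 ψ with hu1
  set v0 : H := B 0 ψ with hv0
  set v1 : H := B 1 ψ with hv1
  have hu0n : ‖u0‖ = 1 := hnorm _ (hA2 0) (hAsa 0)
  have hu1n : ‖u1‖ = 1 := hnorm _ (hA2 1) (hAsa 1)
  have hv0n : ‖v0‖ = 1 := hnorm _ (hB2 0) (hBsa 0)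
  have hv1n : ‖v1‖ = 1 := hnorm _ (hB2 1) (hBsa 1)
  set t : ℝ := (⟪v0, v1⟫).re with htdef
  have ht : t^2 ≤ 1 := by
    have h1' : |t| ≤ 1 := by
      calc |t| ≤ ‖⟪v0, v1⟫‖ := Complex.abs_re_le_norm _
        _ ≤ ‖v0‖ * ‖v1‖ := norm_inner_le_norm _ _
        _ = 1 := by rw [hv0n, hv1n]; ring
    calc t^2 = |t|^2 := (sq_abs t).symm
      _ ≤ 1 := by nlinarith [abs_nonneg t]
  set w0 : H := (α:ℂ) • v0 + (β:ℂ) • v1 with hw0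
  set w1 : H := (β:ℂ) • v0 + (γ:ℂ) • v1 with hw1
  -- norms squared of w0, w1
  have hvv0 : ⟪v0, v0⟫ = 1 := by
    rw [@inner_self_eq_norm_sq_to_K ℂ H _ _ _ v0, hv0n]; norm_num
  have hvv1 : ⟪v1, v1⟫ = 1 := by
    rw [@inner_self_eq_norm_sq_to_K ℂ H _ _ _ v1, hv1n]; norm_num
  have hnsq : ∀ x y : ℝ, ‖(x:ℂ) • v0 + (y:ℂ) • v1‖^2 = x^2 + y^2 + 2*(x*y)*t := by
    intro x y
    have hre : (⟪(x:ℂ) • v0 + (y:ℂ) • v1, (x:ℂ) • v0 + (y:ℂ) • v1⟫).re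
        = x^2 + y^2 + 2*(x*y)*t := by
      simp only [inner_add_left, inner_add_right, inner_smul_left, inner_smul_right,
        Complex.conj_ofReal, hvv0, hvv1]
      rw [← inner_conj_symm v1 v0]
      set z : ℂ := ⟪v0, v1⟫
      simp [Complex.add_re, Complex.mul_re, Complex.conj_re, Complex.conj_im, htdef]
      ring
    rw [@norm_sq_eq_re_inner ℂ _ _ _ _ ((x:ℂ) • v0 + (y:ℂ) • v1)]
    simpa using hre
  have hw0sq : ‖w0‖^2 = α^2 + β^2 + 2*(α*β)*t := by rw [hw0]; exact hnsq α β
  have hw1sq : ‖w1‖^2 = β^2 + γ^2 + 2*(β*γ)*t := by rw [hw1]; exact hnsq β γ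
  -- expand the Bell value
  have hsymA : ∀ x : Fin 2, ∀ u w : H, ⟪A x u, w⟫ = ⟪u, A x w⟫ := fun x => (hAsa x).isSymmetric
  have hE : (inner ℂ ψ
      ((((cos (2 * θ) * cos (θ - φ) : ℝ) : ℂ) • ((A 0) ∘L (B 0))
        + ((-(cos (2 * θ) * cos (2 * φ)) : ℝ) : ℂ) • ((A 0) ∘L (B 1) + (A 1) ∘L (B 0))
        + (((cos (2 * φ) * cos (θ - φ) : ℝ)) : ℂ) • ((A 1) ∘L (B 1))) ψ) : ℂ).re
      = (⟪u0, w0⟫).re + (⟪u1, w1⟫).re := by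
    have e00 : ⟪ψ, A 0 (B 0 ψ)⟫ = ⟪u0, v0⟫ := by rw [← hsymA 0 ψ (B 0 ψ)]
    have e01 : ⟪ψ, A 0 (B 1 ψ)⟫ = ⟪u0, v1⟫ := by rw [← hsymA 0 ψ (B 1 ψ)]
    have e10 : ⟪ψ, A 1 (B 0 ψ)⟫ = ⟪u1, v0⟫ := by rw [← hsymA 1 ψ (B 0 ψ)]
    have e11 : ⟪ψ, A 1 (B 1 ψ)⟫ = ⟪u1, v1⟫ := by rw [← hsymA 1 ψ (B 1 ψ)]
    simp only [ContinuousLinearMap.add_apply, ContinuousLinearMap.smul_apply,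
      ContinuousLinearMap.comp_apply, inner_add_right, inner_smul_right,
      hw0, hw1, e00, e01, e10, e11, ← hcdef, ← hαdef, ← hβdef, ← hγdef]
    simp [Complex.add_re, Complex.mul_re, Complex.ofReal_re, Complex.ofReal_im]
    ring
  rw [hE]
  -- bound by norms
  have hb0 : |(⟪u0, w0⟫).re| ≤ ‖w0‖ := by
    calc |(⟪u0, w0⟫).re| ≤ ‖⟪u0, w0⟫‖ := Complex.abs_re_le_norm _
      _ ≤ ‖u0‖ * ‖w0‖ := norm_inner_le_norm _ _
      _ = ‖w0‖ := by rw [hu0n]; ring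
  have hb1 : |(⟪u1, w1⟫).re| ≤ ‖w1‖ := by
    calc |(⟪u1, w1⟫).re| ≤ ‖⟪u1, w1⟫‖ := Complex.abs_re_le_norm _
      _ ≤ ‖u1‖ * ‖w1‖ := norm_inner_le_norm _ _
      _ = ‖w1‖ := by rw [hu1n]; ring
  -- the scalar bound
  set M1 : ℝ := c^2 + (C*c + S*s)^2 - 2*(C*c + S*s)*c*t with hM1def
  set M2 : ℝ := c^2 + (C*c - S*s)^2 - 2*(C*c - S*s)*c*t with hM2def
  have hM1 : 0 ≤ M1 := by
    nlinarith [sq_nonneg (c - (C*c + S*s)*t), mul_nonneg (sq_nonneg (C*c + S*s)) (by linarith : (0:ℝ) ≤ 1 - t^2)]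
  have hM2 : 0 ≤ M2 := by
    nlinarith [sq_nonneg (c - (C*c - S*s)*t), mul_nonneg (sq_nonneg (C*c - S*s)) (by linarith : (0:ℝ) ≤ 1 - t^2)]
  have hd : 0 ≤ (S*s)^2 - (C*c)^2 := by
    have h1' : (C*c - S*s) * (C*c + S*s) < 0 := by rw [← h2θ, ← h2φ]; exact h1
    nlinarith
  have hw0M : ‖w0‖^2 = (C*c - S*s)^2 * M1 := by
    rw [hw0sq, hα, hβ, hM1def]; ring
  have hw1M : ‖w1‖^2 = (C*c + S*s)^2 * M2 := by
    rw [hw1sq, hβ, hγ, hM2def]; ring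
  have hab : (‖w0‖ * ‖w1‖)^2 = ((S*s)^2 - (C*c)^2)^2 * (M1*M2) := by
    rw [mul_pow, hw0M, hw1M]; ring
  have hid : ‖w0‖^2 + ‖w1‖^2 + ((S*s)^2 - (C*c)^2)*(M1+M2) = (2 * S^2 * |s|)^2 := by
    have habs : |s|^2 = s^2 := sq_abs s
    rw [hw0M, hw1M, hM1def, hM2def]
    linear_combination (-4*S^2*c^2*s^2) * hCS + (4*S^4*s^2) * hcs + (-4*S^4) * habs
  have hfin : ‖w0‖ + ‖w1‖ ≤ 2 * S^2 * |s| :=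
    key_sqrt M1 M2 _ _ _ _ hM1 hM2 hd (norm_nonneg _) (norm_nonneg _) (by positivity) hab hid
  calc |(⟪u0, w0⟫).re + (⟪u1, w1⟫).re| ≤ |(⟪u0, w0⟫).re| + |(⟪u1, w1⟫).re| := abs_add_le _ _
    _ ≤ ‖w0‖ + ‖w1‖ := add_le_add hb0 hb1
    _ ≤ 2 * S^2 * |s| := hfin
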